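/- Let p be a stochastic choice function on a menu M and its two-element subsets, and let i,j ∈ M be a pair over which p(·|M) is not bounded in a cycle, i.e. δ_ij(M) ≠ 0 and (i,j) belongs to no sign-consistent cycle with strictly positive or strictly negative common sign on any subset M' ⊆ M. Then every MSC model rationalizing p on M satisfies q_ij(M) = 0. -/

import Mathlib

open Finset

variable {X : Type*} [DecidableEq X]

/-- The menus relevant to an MSC model on `M`: `M` itself and the two-element subsets of `M`. -/
def RelMenu (M N : Finset X) : Prop := N = M ∨ (N ⊆ M ∧ N.card = 2)

/-- `Q` is row-stochastic on `N`: nonnegative entries, rows summing to 1. -/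
def RowStochOn (N : Finset X) (Q : X → X → ℝ) : Prop :=
  (∀ i ∈ N, ∀ j ∈ N, 0 ≤ Q i j) ∧ ∀ i ∈ N, ∑ j ∈ N, Q i j = 1

/-- The axioms of an MSC model on the menu `M`: row-stochasticity on relevant menus,
(A1) prolonged consideration, (A2) pairwise comparability on binary sets, (A3) TR-IIA. -/
def IsMSC (M : Finset X) (q : Finset X → X → X → ℝ) : Prop :=
  (∀ N, RelMenu M N → RowStochOn N (q N)) ∧
  (∀ N, RelMenu M N → ∀ i ∈ N, 0 < q N i i) ∧
  (∀ i ∈ M, ∀ j ∈ M, i ≠ j → q {i, j} i j = 0 → 0 < q {i, j} j i) ∧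
  (∀ N, RelMenu M N → ∀ i ∈ N, ∀ j ∈ N, i ≠ j →
    q {i, j} i j * q N j i = q {i, j} j i * q N i j)

/-- `p` is a stochastic choice function. -/
def IsSCF (p : Finset X → X → ℝ) : Prop :=
  ∀ N : Finset X, N.Nonempty →
    (∀ i, 0 ≤ p N i) ∧ (∀ i, i ∉ N → p N i = 0) ∧ ∑ i ∈ N, p N i = 1

/-- `σ` is a stationary (row) vector of `Q` on `N`, i.e. `σ (I - Q) = 0` on `N`. -/
def StationaryOn (N : Finset X) (Q : X → X → ℝ) (σ : X → ℝ) : Prop :=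
  ∀ j ∈ N, ∑ i ∈ N, σ i * Q i j = σ j

/-- The MSC model `q` rationalizes `p` on the menu `M`. -/
def Rationalizes (M : Finset X) (q : Finset X → X → X → ℝ) (p : Finset X → X → ℝ) : Prop :=
  IsMSC M q ∧ ∀ N, RelMenu M N → StationaryOn N (q N) (p N)

/-- The weighted difference in choice probabilities `δ_ij(M)`. -/
def delta (p : Finset X → X → ℝ) (M : Finset X) (i j : X) : ℝ :=
  p M i * p {i, j} j - p {i, j} i * p M j

/-- The set of ordered pairs of consecutive elements (with wrap-around) of a list. -/
def cyclePairs (c : List X) : List (X × X) := c.zip (c.rotate 1)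

/-- `c` is a cycle of distinct alternatives lying in (a subset of) `M`. -/
def IsCycleIn (M : Finset X) (c : List X) : Prop :=
  c.Nodup ∧ 2 ≤ c.length ∧ ∀ x ∈ c, x ∈ M

/-- All pairs of the cycle have strictly positive `δ`. -/
def PosConsistent (p : Finset X → X → ℝ) (M : Finset X) (c : List X) : Prop :=
  ∀ pr ∈ cyclePairs c, 0 < delta p M pr.1 pr.2

/-- All pairs of the cycle have strictly negative `δ`. -/
def NegConsistent (p : Finset X → X → ℝ) (M : Finset X) (c : List X) : Prop :=
  ∀ pr ∈ cyclePairs c, delta p M pr.1 pr.2 < 0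

/-- `p(·|M)` is bounded in a cycle over the pair `(i, j)`. -/
def BoundedInCycle (p : Finset X → X → ℝ) (M : Finset X) (i j : X) : Prop :=
  delta p M i j = 0 ∨
    ∃ c : List X, IsCycleIn M c ∧ (i, j) ∈ cyclePairs c ∧
      (PosConsistent p M c ∨ NegConsistent p M c)



private lemma chain_concat' {r : X → X → Prop} :
    ∀ (l : List X) (a b : X), List.Chain r a l →
      r ((a :: l).getLast (List.cons_ne_nil _ _)) b → List.Chain r a (l ++ [b])
  | [], a, b, _, hr => List.Chain.cons (by simpa using hr) List.Chain.nil
  | c :: t, a, b, h, hr => by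
      obtain ⟨hac, ht⟩ := List.isChain_cons_cons.1 h
      refine List.Chain.cons hac (chain_concat' t c b ht ?_)
      rwa [List.getLast_cons (List.cons_ne_nil _ _)] at hr

private lemma chain_pairs' {r : X → X → Prop} :
    ∀ (l : List X) (a : X), List.Chain r a l →
      ∀ pr ∈ ((a :: l).dropLast).zip l, r pr.1 pr.2
  | [], _, _, pr, h => by simp at h
  | c :: t, a, h, pr, hpr => by
      obtain ⟨hac, ht⟩ := List.isChain_cons_cons.1 h
      rw [List.dropLast_cons₂, List.zip_cons_cons, List.mem_cons] at hpr
      rcases hpr with rfl | hpr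
      · exact hac
      · exact chain_pairs' t c ht pr hpr

private lemma chain_mem' {r : X → X → Prop} {M : Finset X} (hM : ∀ a b, r a b → b ∈ M) :
    ∀ (l : List X) (a : X), List.Chain r a l → ∀ x ∈ l, x ∈ M
  | [], _, _, x, hx => by simp at hx
  | c :: t, a, h, x, hx => by
      obtain ⟨hac, ht⟩ := List.isChain_cons_cons.1 h
      rcases List.mem_cons.1 hx with rfl | hx
      · exact hM _ _ hac
      · exact chain_mem' hM t c ht x hx

private lemma getLast_cons_append :
    ∀ (l : List X) (a b : X), (a :: (l ++ [b])).getLast (List.cons_ne_nil _ _) = b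
  | [], _, _ => rfl
  | c :: t, a, b => by
      show (a :: c :: (t ++ [b])).getLast _ = b
      rw [List.getLast_cons (List.cons_ne_nil _ _)]
      exact getLast_cons_append t c b

private lemma cycle_extract {M : Finset X} {f : X → X → ℝ}
    (hskew : ∀ a b, f a b = - f b a)
    (hcons : ∀ b ∈ M, ∑ a ∈ M, f a b = 0)
    {i j : X} (hi : i ∈ M) (hj : j ∈ M) (hf : 0 < f i j) :
    ∃ c : List X, IsCycleIn M c ∧ (i, j) ∈ cyclePairs c ∧
      ∀ pr ∈ cyclePairs c, pr.1 ∈ M ∧ pr.2 ∈ M ∧ 0 < f pr.1 pr.2 := by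
  classical
  have hij : i ≠ j := by
    rintro rfl
    have h0 : f i i = 0 := by have := hskew i i; linarith
    rw [h0] at hf; exact lt_irrefl 0 hf
  set step : X → X → Prop := fun a b => b ∈ M ∧ 0 < f a b with hstep
  set P : X → Prop := fun a =>
    ∃ l : List X, List.Chain step j l ∧ (j :: l).getLast (List.cons_ne_nil _ _) = a ∧
      (j :: l).Nodup with hP
  haveI : DecidablePred P := Classical.decPred P
  set S : Finset X := M.filter P with hS
  have hjS : j ∈ S :=
    mem_filter.2 ⟨hj, ⟨[], List.Chain.nil, rfl, List.nodup_singleton j⟩⟩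
  have hclose : ∀ a ∈ S, ∀ b ∈ M, 0 < f a b → b ∈ S := by
    intro a haS b hbM hab
    obtain ⟨haM, l, hch, hlast, hnd⟩ := mem_filter.1 haS
    by_cases hbmem : b ∈ (j :: l)
    · obtain ⟨s, t, hst⟩ := List.append_of_mem hbmem
      rcases s with _ | ⟨s0, s'⟩
      · simp only [List.nil_append, List.cons.injEq] at hst
        exact hst.1 ▸ hjS
      · have hst' : j = s0 ∧ l = s' ++ b :: t := by
          simpa using hst
        obtain ⟨-, hl⟩ := hst'
        rw [hl] at hch hnd
        have hch' : List.Chain step j (s' ++ [b]) := (List.isChain_cons_split.1 hch).1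
        have hlast' : ((j :: (s' ++ [b])).getLast (List.cons_ne_nil _ _)) = b :=
          getLast_cons_append s' j b
        have hnd' : (j :: (s' ++ [b])).Nodup := by
          have hsub : List.Sublist (j :: (s' ++ [b])) (j :: (s' ++ b :: t)) :=
            List.Sublist.cons₂ j
              (((List.cons_sublist_cons.2 (List.nil_sublist t))).append_left s')
          exact hsub.nodup hnd
        exact mem_filter.2 ⟨hbM, ⟨s' ++ [b], hch', hlast', hnd'⟩⟩
    · refine mem_filter.2 ⟨hbM, ⟨l ++ [b], ?_, ?_, ?_⟩⟩
      · refine chain_concat' l j b hch ?_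
        rw [hlast]; exact ⟨hbM, hab⟩
      · exact getLast_cons_append l j b
      · rw [show j :: (l ++ [b]) = (j :: l) ++ [b] by simp]
        exact List.Nodup.append hnd (List.nodup_singleton b)
          (by intro x hx hx'; rw [List.mem_singleton] at hx'; exact hbmem (hx' ▸ hx))
  have hiS : i ∈ S := by
    by_contra hiS
    have hSsub : S ⊆ M := filter_subset _ _
    have h1 : ∑ b ∈ S, ∑ a ∈ M, f a b = 0 :=
      Finset.sum_eq_zero fun b hb => hcons b (hSsub hb)
    have hsplit : ∀ b ∈ S, ∑ a ∈ M, f a b = ∑ a ∈ M \ S, f a b + ∑ a ∈ S, f a b :=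
      fun b _ => (Finset.sum_sdiff hSsub).symm
    rw [Finset.sum_congr rfl hsplit, Finset.sum_add_distrib] at h1
    have hinner : ∑ b ∈ S, ∑ a ∈ S, f a b = 0 := by
      have e1 : ∑ b ∈ S, ∑ a ∈ S, f a b = ∑ b ∈ S, ∑ a ∈ S, -(f b a) :=
        Finset.sum_congr rfl fun b _ => Finset.sum_congr rfl fun a _ => hskew a b
      have e2 : ∑ b ∈ S, ∑ a ∈ S, -(f b a) = - ∑ b ∈ S, ∑ a ∈ S, f b a := by
        simp
      have e3 : (∑ b ∈ S, ∑ a ∈ S, f b a) = ∑ b ∈ S, ∑ a ∈ S, f a b := Finset.sum_comm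
      linarith [e1, e2, e3]
    rw [hinner, add_zero] at h1
    have hnn : ∀ b ∈ S, ∀ a ∈ M \ S, 0 ≤ f a b := by
      intro b hb a haMS
      obtain ⟨haM, haS⟩ := mem_sdiff.1 haMS
      by_contra hneg
      push_neg at hneg
      have hba : 0 < f b a := by have := hskew a b; linarith
      exact haS (hclose b hb a haM hba)
    have h2 : ∀ b ∈ S, ∑ a ∈ M \ S, f a b = 0 :=
      (Finset.sum_eq_zero_iff_of_nonneg
        (fun b hb => Finset.sum_nonneg fun a ha => hnn b hb a ha)).1 h1
    have hzero : f i j = 0 :=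
      (Finset.sum_eq_zero_iff_of_nonneg fun a ha => hnn j hjS a ha).1 (h2 j hjS) i
        (mem_sdiff.2 ⟨hi, hiS⟩)
    rw [hzero] at hf; exact lt_irrefl 0 hf
  -- extract the cycle
  obtain ⟨hiM, l, hch, hlast, hnd⟩ := mem_filter.1 hiS
  have hlne : l ≠ [] := by
    rintro rfl
    exact hij (by simpa using hlast.symm)
  have hdl : (j :: l).dropLast ++ [i] = j :: l := by
    rw [← hlast]
    exact List.dropLast_append_getLast _
  set d := (j :: l).dropLast with hd
  have hrot : (i :: d).rotate 1 = d ++ [i] := by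
    rw [List.rotate_cons_succ, List.rotate_zero]
  have hpairs : cyclePairs (i :: d) = (i, j) :: d.zip l := by
    unfold cyclePairs
    rw [hrot, hdl, List.zip_cons_cons]
  have hstep_pairs : ∀ pr ∈ d.zip l, pr.1 ∈ M ∧ pr.2 ∈ M ∧ 0 < f pr.1 pr.2 := by
    intro pr hpr
    have h2 := chain_pairs' l j hch pr (by rw [hd] at hpr; exact hpr)
    have h1 : pr.1 ∈ M := by
      have hmem : pr.1 ∈ (j :: l) := List.dropLast_subset _ ((List.of_mem_zip (a := pr.1) (b := pr.2) hpr).1)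
      rcases List.mem_cons.1 hmem with heq | hmem'
      · rw [heq]; exact hj
      · exact chain_mem' (fun a b hab => hab.1) l j hch _ hmem'
    exact ⟨h1, h2.1, h2.2⟩
  refine ⟨i :: d, ⟨?_, ?_, ?_⟩, ?_, ?_⟩
  · have hnd' : (d ++ [i]).Nodup := hdl ▸ hnd
    rw [List.nodup_append] at hnd'
    exact List.nodup_cons.2
      ⟨fun hmem => hnd'.2.2 i hmem i (List.mem_singleton_self i) rfl, hnd'.1⟩
  · have hlen : d.length = l.length := by
      have hc := congrArg List.length hdl
      simp at hc
      omega
    have hl1 : 1 ≤ l.length := List.length_pos_iff.2 hlne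
    simp only [List.length_cons]
    omega
  · intro x hx
    rcases List.mem_cons.1 hx with rfl | hx
    · exact hiM
    · have hxjl : x ∈ (j :: l) := List.dropLast_subset _ hx
      rcases List.mem_cons.1 hxjl with rfl | hx'
      · exact hj
      · exact chain_mem' (fun a b hab => hab.1) l j hch x hx'
  · rw [hpairs]; exact List.mem_cons_self
  · intro pr hpr
    rw [hpairs] at hpr
    rcases List.mem_cons.1 hpr with rfl | hpr
    · exact ⟨hi, hj, hf⟩
    · exact hstep_pairs pr hpr

private lemma core_rel {M : Finset X} {p : Finset X → X → ℝ} {q : Finset X → X → X → ℝ}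
    (hp : IsSCF p) (hq : Rationalizes M q p) {a b : X}
    (ha : a ∈ M) (hb : b ∈ M) (hab : a ≠ b) :
    q M a b = 0 ∨ (0 < p {a, b} b ∧
      p {a, b} b * (p M a * q M a b - p M b * q M b a) = q M a b * delta p M a b) := by
  have hrel : RelMenu M ({a, b} : Finset X) :=
    Or.inr ⟨insert_subset ha (singleton_subset_iff.2 hb), card_pair hab⟩
  have hamem : a ∈ ({a, b} : Finset X) := mem_insert_self a {b}
  have hbmem : b ∈ ({a, b} : Finset X) := mem_insert_of_mem (mem_singleton_self b)
  have hrs := hq.1.1 _ hrel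
  have hrowb : q {a, b} b a + q {a, b} b b = 1 := by
    have := hrs.2 b hbmem
    rwa [Finset.sum_pair hab] at this
  have hstatb := hq.2 _ hrel b hbmem
  rw [Finset.sum_pair hab] at hstatb
  have hxy : p {a, b} a * q {a, b} a b = p {a, b} b * q {a, b} b a := by
    linear_combination hstatb - p {a, b} b * hrowb
  have htr : q {a, b} a b * q M b a = q {a, b} b a * q M a b :=
    hq.1.2.2.2 M (Or.inl rfl) a ha b hb hab
  have hαnn : 0 ≤ q {a, b} a b := hrs.1 a hamem b hbmem
  rcases eq_or_lt_of_le hαnn with hα0 | hαpos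
  · have hβpos : 0 < q {a, b} b a := hq.1.2.2.1 a ha b hb hab hα0.symm
    left
    have hz : q {a, b} b a * q M a b = 0 := by rw [← htr, ← hα0]; ring
    exact (mul_eq_zero.1 hz).resolve_left (ne_of_gt hβpos)
  · right
    have hpair : ({a, b} : Finset X).Nonempty := insert_nonempty _ _
    obtain ⟨hpnn, hpz, hpsum⟩ := hp _ hpair
    rw [Finset.sum_pair hab] at hpsum
    have hypos : 0 < p {a, b} b := by
      rcases eq_or_lt_of_le (hpnn b) with h0 | h
      · exfalso
        have hx1 : p {a, b} a = 1 := by linarith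
        have hz : q {a, b} a b = 0 := by
          have := hxy
          rw [hx1, ← h0] at this
          linarith
        exact absurd hz (ne_of_gt hαpos)
      · exact h
    refine ⟨hypos, ?_⟩
    have hAx : q M a b * p {a, b} a = p {a, b} b * q M b a := by
      have h1 : q {a, b} a b * (q M a b * p {a, b} a) =
          q {a, b} a b * (p {a, b} b * q M b a) := by
        linear_combination q M a b * hxy - p {a, b} b * htr
      exact mul_left_cancel₀ (ne_of_gt hαpos) h1
    unfold delta
    linear_combination p M b * hAx

/-- If `p(·|M)` is not bounded in a cycle over the pair `(i, j)`, then every MSC model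
rationalizing `p` on `M` has `q_ij(M) = 0`. -/
theorem stmt9 (M : Finset X) (hM : M.Nonempty)
    (p : Finset X → X → ℝ) (hp : IsSCF p)
    (i j : X) (hi : i ∈ M) (hj : j ∈ M)
    (hnb : ¬ BoundedInCycle p M i j) :
    ∀ q : Finset X → X → X → ℝ, Rationalizes M q p → q M i j = 0 := by
  intro q hq
  by_contra hA0
  have hdne : delta p M i j ≠ 0 := fun h => hnb (Or.inl h)
  have hnc : ∀ c : List X, ¬ (IsCycleIn M c ∧ (i, j) ∈ cyclePairs c ∧
      (PosConsistent p M c ∨ NegConsistent p M c)) :=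
    fun c hc => hnb (Or.inr ⟨c, hc⟩)
  have hij : i ≠ j := by
    rintro rfl
    exact hdne (by unfold delta; ring)
  have hqnn := (hq.1.1 M (Or.inl rfl)).1
  have hApos : 0 < q M i j := lt_of_le_of_ne (hqnn i hi j hj) (Ne.symm hA0)
  set f : X → X → ℝ := fun a b => p M a * q M a b - p M b * q M b a with hfdef
  have hskew : ∀ a b, f a b = - f b a := by
    intro a b; simp only [hfdef]; ring
  have hcons : ∀ b ∈ M, ∑ a ∈ M, f a b = 0 := by
    intro b hb
    have hstat := hq.2 M (Or.inl rfl) b hb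
    have hrow := (hq.1.1 M (Or.inl rfl)).2 b hb
    simp only [hfdef]
    rw [Finset.sum_sub_distrib, hstat, ← Finset.mul_sum, hrow, mul_one, sub_self]
  have hpos_delta : ∀ a ∈ M, ∀ b ∈ M, 0 < f a b → 0 < delta p M a b := by
    intro a ha b hb hfab
    have hab : a ≠ b := by
      rintro rfl
      simp only [hfdef] at hfab
      nlinarith
    rcases core_rel hp hq ha hb hab with h0 | ⟨hy, hid⟩
    · exfalso
      have h1 : 0 ≤ p M b := (hp M hM).1 b
      have h2 : 0 ≤ q M b a := hqnn b hb a ha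
      simp only [hfdef] at hfab
      rw [h0] at hfab
      nlinarith
    · have hAnn : 0 ≤ q M a b := hqnn a ha b hb
      simp only [hfdef] at hfab
      nlinarith
  have hfij_ne : f i j ≠ 0 := by
    rcases core_rel hp hq hi hj hij with h0 | ⟨hy, hid⟩
    · exact absurd h0 hA0
    · intro h
      simp only [hfdef] at h
      rw [h, mul_zero] at hid
      have hd0 : delta p M i j = 0 := by
        rcases mul_eq_zero.1 hid.symm with h' | h'
        · exact absurd h' hA0
        · exact h'
      exact hdne hd0
  have hdelta_anti : ∀ a b : X, delta p M a b = - delta p M b a := by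
    intro a b
    unfold delta
    rw [Finset.pair_comm b a]
    ring
  rcases lt_or_gt_of_ne hfij_ne with hneg | hpos
  · obtain ⟨c, hcyc, hmem, hall⟩ :=
      cycle_extract (f := fun a b => - f a b)
        (fun a b => by show - f a b = - - f b a; rw [hskew a b])
        (fun b hb => by
          show ∑ a ∈ M, - f a b = 0
          rw [Finset.sum_neg_distrib, hcons b hb, neg_zero])
        hi hj (by simpa using hneg)
    refine hnc c ⟨hcyc, hmem, Or.inr ?_⟩
    intro pr hpr
    obtain ⟨h1, h2, h3⟩ := hall pr hpr
    have hf21 : 0 < f pr.2 pr.1 := by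
      have := hskew pr.1 pr.2
      linarith
    have hd := hpos_delta pr.2 h2 pr.1 h1 hf21
    have := hdelta_anti pr.1 pr.2
    linarith
  · obtain ⟨c, hcyc, hmem, hall⟩ := cycle_extract hskew hcons hi hj hpos
    refine hnc c ⟨hcyc, hmem, Or.inl ?_⟩
    intro pr hpr
    obtain ⟨h1, h2, h3⟩ := hall pr hpr
    exact hpos_delta pr.1 h1 pr.2 h2 h3
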